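/- Fix $Y_0, k, a, \sigma > 0$ and a continuous $g:[0,\infty)\to\mathbb{R}$ with $g(0)=0$. For $\varepsilon>0$ let $Y_\varepsilon$ be the continuous solution of $Y_\varepsilon(t) = Y_0 + \int_0^t \frac{k}{Y_\varepsilon(s)\mathbf{1}_{\{Y_\varepsilon(s)>0\}}+\varepsilon}\,ds - a\int_0^t Y_\varepsilon(s)\,ds + \sigma g(t)$. Then for any $0 < \varepsilon_2 < \varepsilon_1$ and all $t > 0$, $Y_{\varepsilon_1}(t) < Y_{\varepsilon_2}(t)$; consequently, for each $t\ge 0$ the limit $Y(t) = \lim_{\varepsilon\downarrow 0} Y_\varepsilon(t)$ exists in $(-\infty, +\infty]$ and is finite (bounded above by $C_1^{1/r} + C_2^{1/r}\sup_{[0,T]}|g|$ on any $[0,T]$). -/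

import Mathlib

open Filter Topology MeasureTheory Set intervalIntegral

lemma myFTC {f : ℝ → ℝ} (hf : Continuous f) (a t : ℝ) :
    HasDerivAt (fun u => ∫ s in a..u, f s) (f t) t :=
  integral_hasDerivAt_right (hf.intervalIntegrable _ _)
    hf.aestronglyMeasurable.stronglyMeasurableAtFilter hf.continuousAt

lemma pos_right {Z : ℝ → ℝ} {t₀ c : ℝ} (hd : HasDerivAt Z c t₀) (hZ : Z t₀ = 0)
    (hc : 0 < c) : ∀ᶠ t in 𝓝[>] t₀, 0 < Z t := by
  have hs : Tendsto (slope Z t₀) (𝓝[>] t₀) (𝓝 c) :=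
    (hasDerivAt_iff_tendsto_slope.mp hd).mono_left
      (nhdsWithin_mono _ (fun x hx => ne_of_gt hx))
  filter_upwards [hs.eventually (eventually_gt_nhds hc), self_mem_nhdsWithin] with t hst ht
  have h1 : 0 < t - t₀ := sub_pos.mpr ht
  have : Z t = slope Z t₀ t * (t - t₀) + Z t₀ := by
    rw [slope_def_field, div_mul_cancel₀ _ h1.ne', sub_add_cancel]
  rw [this, hZ, add_zero]
  exact mul_pos hst h1

lemma nonpos_left {Z : ℝ → ℝ} {t₀ c : ℝ} (hd : HasDerivAt Z c t₀) (hZ : Z t₀ = 0)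
    (hnn : ∀ᶠ t in 𝓝[<] t₀, 0 ≤ Z t) : c ≤ 0 := by
  have hs : Tendsto (slope Z t₀) (𝓝[<] t₀) (𝓝 c) :=
    (hasDerivAt_iff_tendsto_slope.mp hd).mono_left
      (nhdsWithin_mono _ (fun x hx => ne_of_lt hx))
  refine le_of_tendsto hs ?_
  filter_upwards [hnn, self_mem_nhdsWithin] with t h1 h2
  rw [slope_def_field, hZ, sub_zero]
  exact div_nonpos_of_nonneg_of_nonpos h1 (sub_nonpos.mpr h2.le)

lemma denom_cont {Y : ℝ → ℝ} (hY : Continuous Y) {k ε : ℝ} (hε : 0 < ε) :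
    Continuous (fun s => k / (max (Y s) 0 + ε)) := by
  apply continuous_const.div ((hY.max continuous_const).add continuous_const)
  intro s
  have : (0:ℝ) ≤ max (Y s) 0 := le_max_right _ _
  exact (add_pos_of_nonneg_of_pos this hε).ne'

lemma comp_aux {k a ε₁ ε₂ : ℝ} (hk : 0 < k) (h2 : 0 < ε₂) (h12 : ε₂ < ε₁)
    {Y₁ Y₂ : ℝ → ℝ} (hc1 : Continuous Y₁) (hc2 : Continuous Y₂)
    (h0 : Y₁ 0 = Y₂ 0)
    (heq : ∀ t, 0 ≤ t → Y₂ t - Y₁ t = ∫ s in (0:ℝ)..t,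
      (k / (max (Y₂ s) 0 + ε₂) - k / (max (Y₁ s) 0 + ε₁) - a * (Y₂ s - Y₁ s))) :
    ∀ t, 0 < t → Y₁ t < Y₂ t := by
  have h1 : 0 < ε₁ := h2.trans h12
  set h : ℝ → ℝ := fun s =>
    k / (max (Y₂ s) 0 + ε₂) - k / (max (Y₁ s) 0 + ε₁) - a * (Y₂ s - Y₁ s) with hh
  have hcont : Continuous h :=
    ((denom_cont hc2 h2).sub (denom_cont hc1 h1)).sub (continuous_const.mul (hc2.sub hc1))
  have hpos : ∀ s, Y₁ s = Y₂ s → 0 < h s := by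
    intro s hs
    have hd2 : (0:ℝ) < max (Y₁ s) 0 + ε₂ := by
      have := le_max_right (Y₁ s) 0; positivity
    have : k / (max (Y₁ s) 0 + ε₁) < k / (max (Y₁ s) 0 + ε₂) :=
      div_lt_div_of_pos_left hk hd2 (by linarith)
    simp only [hh, ← hs]
    nlinarith
  set Z : ℝ → ℝ := fun t => ∫ s in (0:ℝ)..t, h s with hZ
  have hZd : ∀ t, HasDerivAt Z (h t) t := fun t => myFTC hcont 0 t
  have hZc : Continuous Z := continuous_iff_continuousAt.mpr fun t => (hZd t).continuousAt
  have hZY : ∀ t, 0 ≤ t → Z t = Y₂ t - Y₁ t := fun t ht => (heq t ht).symm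
  have hZ0 : Z 0 = 0 := by simp [hZ]
  -- main claim : Z t > 0 for t > 0
  suffices hmain : ∀ t, 0 < t → 0 < Z t by
    intro t ht
    have := hmain t ht
    rw [hZY t ht.le] at this
    linarith
  by_contra hcon
  push_neg at hcon
  obtain ⟨t₁, ht₁, hZt₁⟩ := hcon
  set S : Set ℝ := {t | 0 < t ∧ Z t ≤ 0} with hS
  have hSne : S.Nonempty := ⟨t₁, ht₁, hZt₁⟩
  have hSbdd : BddBelow S := ⟨0, fun x hx => hx.1.le⟩
  set t₀ := sInf S with ht₀
  -- small positive interval where Z > 0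
  have hev : ∀ᶠ t in 𝓝[>] (0:ℝ), 0 < Z t := pos_right (hZd 0) hZ0 (hpos 0 h0)
  obtain ⟨δ, hδ, hδZ⟩ := (mem_nhdsGT_iff_exists_Ioo_subset).mp hev
  have hδle : ∀ x ∈ S, δ ≤ x := by
    intro x hx
    by_contra hlt
    push_neg at hlt
    exact absurd (hδZ ⟨hx.1, hlt⟩) (not_lt.mpr hx.2)
  have ht₀pos : 0 < t₀ := lt_of_lt_of_le hδ (le_csInf hSne hδle)
  have hmem : ∀ t, 0 < t → t < t₀ → 0 < Z t := by
    intro t htp htl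
    by_contra hc'
    push_neg at hc'
    exact absurd (csInf_le hSbdd ⟨htp, hc'⟩) (not_le.mpr htl)
  have hZt₀le : Z t₀ ≤ 0 := by
    have hcl : IsClosed {t : ℝ | Z t ≤ 0} := isClosed_le hZc continuous_const
    have : t₀ ∈ closure S := csInf_mem_closure hSne hSbdd
    exact (hcl.closure_subset_iff.mpr (fun x hx => hx.2)) this
  have hIoo : Ioo 0 t₀ ∈ 𝓝[<] t₀ := Ioo_mem_nhdsLT_of_mem ⟨ht₀pos, le_refl _⟩
  have hnnl : ∀ᶠ t in 𝓝[<] t₀, 0 ≤ Z t := by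
    filter_upwards [hIoo] with t ht
    exact (hmem t ht.1 ht.2).le
  have hZt₀ge : 0 ≤ Z t₀ :=
    ge_of_tendsto (hZc.continuousAt.mono_left nhdsWithin_le_nhds) hnnl
  have hZt₀ : Z t₀ = 0 := le_antisymm hZt₀le hZt₀ge
  have hY12 : Y₁ t₀ = Y₂ t₀ := by
    have := hZY t₀ ht₀pos.le
    rw [hZt₀] at this
    linarith [this.symm]
  exact absurd (nonpos_left (hZd t₀) hZt₀ hnnl) (not_le.mpr (hpos t₀ hY12))

lemma ubound {Y₀ k a σ ε : ℝ} (hY₀ : 0 < Y₀) (hk : 0 < k) (ha : 0 < a) (hσ : 0 < σ)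
    (hε : 0 < ε) {g Yε : ℝ → ℝ} (hg : Continuous g) (hg0 : g 0 = 0) (hc : Continuous Yε)
    (heq : ∀ t, 0 ≤ t → Yε t = Y₀ + (∫ s in (0:ℝ)..t, k / (max (Yε s) 0 + ε))
      - a * (∫ s in (0:ℝ)..t, Yε s) + σ * g t)
    {T t : ℝ} (hT : 0 < T) (ht : t ∈ Icc 0 T) {G : ℝ}
    (hG : ∀ s ∈ Icc (0:ℝ) T, |g s| ≤ G) :
    Yε t ≤ Y₀ + k * T / Y₀ + 2 * σ * G := by
  have hGnn : 0 ≤ G := le_trans (abs_nonneg _) (hG 0 ⟨le_refl _, hT.le⟩)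
  have hY0 : Yε 0 = Y₀ := by
    have := heq 0 le_rfl; simpa [hg0] using this
  by_contra hcon
  push_neg at hcon
  have hkT : 0 < k * T / Y₀ := by positivity
  have hBY : Y₀ < Yε t := by nlinarith
  set A : Set ℝ := {s | s ∈ Icc 0 t ∧ Yε s ≤ Y₀} with hA
  have hAne : A.Nonempty := ⟨0, ⟨le_refl _, ht.1⟩, hY0.le⟩
  have hAbdd : BddAbove A := ⟨t, fun x hx => hx.1.2⟩
  have hAcl : IsClosed A := by
    have : A = (Icc 0 t) ∩ Yε ⁻¹' (Iic Y₀) := by ext x; simp [hA, Set.mem_inter_iff]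
    rw [this]
    exact isClosed_Icc.inter (isClosed_Iic.preimage hc)
  set u := sSup A with hu
  have huA : u ∈ A := hAcl.csSup_mem hAne hAbdd
  have hut : u ≤ t := huA.1.2
  have hu0 : 0 ≤ u := huA.1.1
  have hgt : ∀ s, u < s → s ≤ t → Y₀ < Yε s := by
    intro s hus hst
    rcases le_or_gt (Yε s) Y₀ with h | h
    · exact absurd (le_csSup hAbdd ⟨⟨hu0.trans hus.le, hst⟩, h⟩) (not_le.mpr hus)
    · exact h
  have hult : u < t := by
    rcases lt_or_eq_of_le hut with h | h
    · exact h
    · exfalso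
      have h2 := huA.2
      rw [h] at h2
      exact absurd h2 (not_le.mpr hBY)
  have hYu : Yε u = Y₀ := by
    refine le_antisymm huA.2 ?_
    have hIoo : Ioo u t ∈ 𝓝[>] u := Ioo_mem_nhdsGT_of_mem ⟨le_refl _, hult⟩
    have htend : Tendsto Yε (𝓝[>] u) (𝓝 (Yε u)) := hc.continuousAt.mono_left nhdsWithin_le_nhds
    refine ge_of_tendsto htend ?_
    filter_upwards [hIoo] with s hs
    exact (hgt s hs.1 hs.2.le).le
  have hYge : ∀ s ∈ Icc u t, Y₀ ≤ Yε s := by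
    intro s hs
    rcases eq_or_lt_of_le hs.1 with h | h
    · rw [← h, hYu]
    · exact (hgt s h hs.2).le
  set D : ℝ → ℝ := fun s => k / (max (Yε s) 0 + ε) with hD
  have hDc : Continuous D := denom_cont hc hε
  have hsplit : ∀ f : ℝ → ℝ, Continuous f →
      (∫ s in (0:ℝ)..t, f s) - (∫ s in (0:ℝ)..u, f s) = ∫ s in u..t, f s := by
    intro f hf
    have := integral_add_adjacent_intervals (a := (0:ℝ)) (b := u) (c := t) (μ := volume)
      (hf.intervalIntegrable _ _) (hf.intervalIntegrable _ _)
    linarith [this]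
  have key : Yε t = Yε u + (∫ s in u..t, D s) - a * (∫ s in u..t, Yε s)
      + σ * g t - σ * g u := by
    have e1 := heq t (hu0.trans hut)
    have e2 := heq u hu0
    have d1 := hsplit D hDc
    have d2 := hsplit Yε hc
    have d2a : a * (∫ s in (0:ℝ)..t, Yε s) - a * (∫ s in (0:ℝ)..u, Yε s)
        = a * ∫ s in u..t, Yε s := by rw [← mul_sub, d2]
    linarith [e1, e2, d1, d2a]
  have hDb : (∫ s in u..t, D s) ≤ (t - u) * k / Y₀ := by
    have : (∫ s in u..t, D s) ≤ ∫ s in u..t, (k / Y₀) := by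
      apply integral_mono_on hut (hDc.intervalIntegrable _ _) intervalIntegrable_const
      intro s hs
      have h1 : Y₀ ≤ max (Yε s) 0 := le_trans (hYge s hs) (le_max_left _ _)
      have h2 : Y₀ ≤ max (Yε s) 0 + ε := by linarith
      exact div_le_div_of_nonneg_left hk.le hY₀ h2
    simpa using this
  have hYb : 0 ≤ ∫ s in u..t, Yε s := by
    apply integral_nonneg hut
    intro s hs
    exact le_trans hY₀.le (hYge s hs)
  have hgb : σ * g t - σ * g u ≤ 2 * σ * G := by
    have h1 := abs_le.mp (hG t ht)
    have h2 := abs_le.mp (hG u ⟨hu0, hut.trans ht.2⟩)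
    nlinarith [h1.2, h2.1]
  have htu : (t - u) * k / Y₀ ≤ k * T / Y₀ := by
    have h1 : t - u ≤ T := by linarith [ht.2]
    have h2 : (t - u) * k ≤ k * T := by nlinarith
    exact div_le_div_of_nonneg_right h2 hY₀.le
  nlinarith [key, hDb, hYb, hgb, htu, mul_nonneg ha.le hYb]


lemma rhs_bound {Y₀ k a σ T r G : ℝ} (hY₀ : 0 < Y₀) (hk : 0 < k) (ha : 0 < a) (hσ : 0 < σ)
    (hT : 0 < T) (hr : 1 ≤ r) (hG : 0 ≤ G) :
    Y₀ + k * T / Y₀ + 2 * σ * G ≤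
      (Real.exp ((8 * a * T) ^ r) * ((4 * Y₀) ^ r + (16 * k * T / Y₀) ^ r)) ^ (1 / r)
        + ((8 * σ) ^ r * Real.exp ((8 * a * T) ^ r)) ^ (1 / r) * G := by
  have hr0 : r ≠ 0 := by linarith
  have hinv : (0:ℝ) ≤ 1 / r := by positivity
  have hid : ∀ x : ℝ, 0 ≤ x → (x ^ r) ^ (1 / r) = x := by
    intro x hx
    rw [← Real.rpow_mul hx, mul_one_div_cancel hr0, Real.rpow_one]
  have hE : 1 ≤ Real.exp ((8 * a * T) ^ r) :=
    Real.one_le_exp (Real.rpow_nonneg (by positivity) r)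
  set E := Real.exp ((8 * a * T) ^ r) with hEdef
  have hA : (0:ℝ) < 4 * Y₀ := by linarith
  have hB : (0:ℝ) < 16 * k * T / Y₀ := by positivity
  have hAr : (0:ℝ) ≤ (4 * Y₀) ^ r := Real.rpow_nonneg hA.le r
  have hBr : (0:ℝ) ≤ (16 * k * T / Y₀) ^ r := Real.rpow_nonneg hB.le r
  have h1 : 4 * Y₀ ≤ (E * ((4 * Y₀) ^ r + (16 * k * T / Y₀) ^ r)) ^ (1 / r) := by
    calc 4 * Y₀ = ((4 * Y₀) ^ r) ^ (1 / r) := (hid _ hA.le).symm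
    _ ≤ _ := Real.rpow_le_rpow hAr (by nlinarith) hinv
  have h2 : 16 * k * T / Y₀ ≤ (E * ((4 * Y₀) ^ r + (16 * k * T / Y₀) ^ r)) ^ (1 / r) := by
    calc 16 * k * T / Y₀ = ((16 * k * T / Y₀) ^ r) ^ (1 / r) := (hid _ hB.le).symm
    _ ≤ _ := Real.rpow_le_rpow hBr (by nlinarith) hinv
  have hσr : (0:ℝ) ≤ (8 * σ) ^ r := Real.rpow_nonneg (by positivity) r
  have h3 : 8 * σ ≤ ((8 * σ) ^ r * E) ^ (1 / r) := by
    calc 8 * σ = ((8 * σ) ^ r) ^ (1 / r) := (hid _ (by positivity)).symm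
    _ ≤ _ := Real.rpow_le_rpow hσr (by nlinarith) hinv
  have h4 : 2 * σ * G ≤ ((8 * σ) ^ r * E) ^ (1 / r) * G :=
    mul_le_mul_of_nonneg_right (by linarith) hG
  have hBeq : 16 * k * T / Y₀ = 16 * (k * T / Y₀) := by ring
  have hkT : 0 < k * T / Y₀ := by positivity
  linarith


open Filter Topology MeasureTheory Set

/-- Monotonicity in ε of the ε-approximations and existence/finiteness of the
pointwise limit Y, with the explicit upper bound on compacts. -/
theorem eps_approx_monotone_and_limit
    (Y₀ k a σ : ℝ) (hY₀ : 0 < Y₀) (hk : 0 < k) (ha : 0 < a) (hσ : 0 < σ)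
    (g : ℝ → ℝ) (hg : Continuous g) (hg0 : g 0 = 0)
    (Y : ℝ → ℝ → ℝ)
    (hYc : ∀ ε : ℝ, 0 < ε → Continuous (Y ε))
    (hYeq : ∀ ε : ℝ, 0 < ε → ∀ t : ℝ, 0 ≤ t →
      Y ε t = Y₀ + (∫ s in (0:ℝ)..t, k / ((if 0 < Y ε s then Y ε s else 0) + ε))
        - a * (∫ s in (0:ℝ)..t, Y ε s) + σ * g t) :
    (∀ ε₁ ε₂ : ℝ, 0 < ε₂ → ε₂ < ε₁ → ∀ t : ℝ, 0 < t → Y ε₁ t < Y ε₂ t) ∧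
    ∃ Ylim : ℝ → ℝ, ∀ t : ℝ, 0 ≤ t →
      Tendsto (fun ε => Y ε t) (𝓝[>] 0) (𝓝 (Ylim t)) ∧
      ∀ T r : ℝ, 0 < T → 1 ≤ r → t ≤ T →
        Ylim t ≤
          (Real.exp ((8 * a * T) ^ r) * ((4 * Y₀) ^ r + (16 * k * T / Y₀) ^ r)) ^ (1 / r)
            + ((8 * σ) ^ r * Real.exp ((8 * a * T) ^ r)) ^ (1 / r) *
              ⨆ s : Set.Icc (0:ℝ) T, |g s| := by
  have hmax : ∀ y : ℝ, (if 0 < y then y else 0) = max y 0 := by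
    intro y
    split_ifs with h
    · exact (max_eq_left h.le).symm
    · exact (max_eq_right (not_lt.mp h)).symm
  have hYeq' : ∀ ε : ℝ, 0 < ε → ∀ t : ℝ, 0 ≤ t →
      Y ε t = Y₀ + (∫ s in (0:ℝ)..t, k / (max (Y ε s) 0 + ε))
        - a * (∫ s in (0:ℝ)..t, Y ε s) + σ * g t := by
    intro ε hε t ht
    have := hYeq ε hε t ht
    simpa only [hmax] using this
  have hY0 : ∀ ε : ℝ, 0 < ε → Y ε 0 = Y₀ := by
    intro ε hε
    have := hYeq' ε hε 0 le_rfl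
    simpa [hg0] using this
  -- Part 1 : strict monotonicity in ε
  have part1 : ∀ ε₁ ε₂ : ℝ, 0 < ε₂ → ε₂ < ε₁ → ∀ t : ℝ, 0 < t → Y ε₁ t < Y ε₂ t := by
    intro ε₁ ε₂ h2 h12
    have h1 : 0 < ε₁ := h2.trans h12
    apply comp_aux (a := a) hk h2 h12 (hYc ε₁ h1) (hYc ε₂ h2)
    · rw [hY0 ε₁ h1, hY0 ε₂ h2]
    · intro t ht
      have e1 := hYeq' ε₁ h1 t ht
      have e2 := hYeq' ε₂ h2 t ht
      have hI : ∀ f : ℝ → ℝ, Continuous f → IntervalIntegrable f volume 0 t :=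
        fun f hf => hf.intervalIntegrable _ _
      have hD1c : Continuous (fun s => k / (max (Y ε₁ s) 0 + ε₁)) :=
        denom_cont (hYc ε₁ h1) h1
      have hD2c : Continuous (fun s => k / (max (Y ε₂ s) 0 + ε₂)) :=
        denom_cont (hYc ε₂ h2) h2
      rw [intervalIntegral.integral_sub ((hI _ hD2c).sub (hI _ hD1c))
            (hI (fun s => a * (Y ε₂ s - Y ε₁ s)) (continuous_const.mul ((hYc ε₂ h2).sub (hYc ε₁ h1)))),
        intervalIntegral.integral_sub (hI _ hD2c) (hI _ hD1c),
        intervalIntegral.integral_const_mul a (fun s => Y ε₂ s - Y ε₁ s),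
        intervalIntegral.integral_sub (hI _ (hYc ε₂ h2)) (hI _ (hYc ε₁ h1))]
      have hexp : a * ((∫ s in (0:ℝ)..t, Y ε₂ s) - (∫ s in (0:ℝ)..t, Y ε₁ s))
          = a * (∫ s in (0:ℝ)..t, Y ε₂ s) - a * (∫ s in (0:ℝ)..t, Y ε₁ s) :=
        mul_sub _ _ _
      linarith
  refine ⟨part1, fun t => sSup ((fun ε => Y ε t) '' Ioi 0), fun t ht => ?_⟩
  -- sup bounds on g
  have hG' : ∀ T : ℝ, 0 < T → ∀ s ∈ Icc (0:ℝ) T, |g s| ≤ ⨆ s : Icc (0:ℝ) T, |g s| := by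
    intro T hT s hs
    have hbdd : BddAbove (range fun s : Icc (0:ℝ) T => |g s.1|) := by
      have hre : range (fun s : Icc (0:ℝ) T => |g s.1|) = (fun x => |g x|) '' Icc 0 T := by
        ext y
        constructor
        · rintro ⟨⟨x, hx⟩, rfl⟩; exact ⟨x, hx, rfl⟩
        · rintro ⟨x, hx, rfl⟩; exact ⟨⟨x, hx⟩, rfl⟩
      rw [hre]
      exact (isCompact_Icc.image_of_continuousOn hg.abs.continuousOn).bddAbove
    exact le_ciSup hbdd ⟨s, hs⟩
  have hGnn : ∀ T : ℝ, 0 < T → 0 ≤ ⨆ s : Icc (0:ℝ) T, |g s| :=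
    fun T hT => le_trans (abs_nonneg (g 0)) (hG' T hT 0 ⟨le_rfl, hT.le⟩)
  -- antitone in ε
  have antit : AntitoneOn (fun ε => Y ε t) (Ioi 0) := by
    intro ε₁ hε₁ ε₂ hε₂ h12
    rcases eq_or_lt_of_le h12 with h | hlt
    · rw [h]
    · rcases eq_or_lt_of_le ht with h | hpos
      · simp only [← h, hY0 ε₁ hε₁, hY0 ε₂ hε₂, le_refl]
      · exact (part1 ε₂ ε₁ hε₁ hlt t hpos).le
  have bdd : BddAbove ((fun ε => Y ε t) '' Ioi 0) := by
    refine ⟨Y₀ + k * (t + 1) / Y₀ + 2 * σ * (⨆ s : Icc (0:ℝ) (t + 1), |g s|), ?_⟩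
    rintro y ⟨ε, hε, rfl⟩
    exact ubound hY₀ hk ha hσ hε hg hg0 (hYc ε hε) (hYeq' ε hε)
      (by linarith) ⟨ht, by linarith⟩ (hG' (t + 1) (by linarith))
  refine ⟨antit.tendsto_nhdsGT bdd, ?_⟩
  intro T r hT hr htT
  have hsup_le : sSup ((fun ε => Y ε t) '' Ioi 0)
      ≤ Y₀ + k * T / Y₀ + 2 * σ * (⨆ s : Icc (0:ℝ) T, |g s|) := by
    have hne : ((fun ε => Y ε t) '' Ioi 0).Nonempty :=
      ⟨Y 1 t, mem_image_of_mem _ (by norm_num)⟩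
    apply csSup_le hne
    rintro y ⟨ε, hε, rfl⟩
    exact ubound hY₀ hk ha hσ hε hg hg0 (hYc ε hε) (hYeq' ε hε) hT ⟨ht, htT⟩ (hG' T hT)
  exact hsup_le.trans (rhs_bound hY₀ hk ha hσ hT hr (hGnn T hT))
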